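/- Let R̄(u) = f(u/h) R(u) be the normalized rational R-matrix. Then R̄(u) · R̄(u + hκ)' = 1 and R̄(u + hκ)' · R̄(u) = 1 (crossing symmetry), where ' denotes the form-transpose applied to one tensor factor. -/

import Mathlib

open Matrix PowerSeries

/-- The permutation operator `P = ∑_{i,j} e_{ij} ⊗ e_{ji}`. -/
noncomputable def Pm (N : ℕ) : Matrix (Fin N × Fin N) (Fin N × Fin N) ℂ :=
  ∑ i : Fin N, ∑ j : Fin N,
    Matrix.kroneckerMap (· * ·) (Matrix.single i j (1 : ℂ))
      (Matrix.single j i (1 : ℂ))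

/-- `Q = ∑_{i,j} ε_i ε_j e_{ij} ⊗ e_{i'j'}`, with `i' = N - i + 1` realized as `Fin.rev`. -/
noncomputable def Qm (N : ℕ) (ε : Fin N → ℂ) : Matrix (Fin N × Fin N) (Fin N × Fin N) ℂ :=
  ∑ i : Fin N, ∑ j : Fin N,
    (ε i * ε j) • Matrix.kroneckerMap (· * ·) (Matrix.single i j (1 : ℂ))
      (Matrix.single i.rev j.rev (1 : ℂ))

/-- Orthogonal case data: all `ε_i = 1` and `κ = N/2 - 1`. -/
def orthCase (N : ℕ) (ε : Fin N → ℂ) (κ : ℂ) : Prop :=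
  (∀ i, ε i = 1) ∧ κ = (N : ℂ) / 2 - 1

/-- Symplectic case data: `N` even, `ε_i = ±1` by halves, and `κ = N/2 + 1`. -/
def spCase (N : ℕ) (ε : Fin N → ℂ) (κ : ℂ) : Prop :=
  N % 2 = 0 ∧ (∀ i : Fin N, ε i = if (i : ℕ) < N / 2 then 1 else -1) ∧ κ = (N : ℂ) / 2 + 1

/-- For a series in `u⁻¹` (encoded as a power series in `X = u⁻¹`), the substitution
`u ↦ u + c`, via `(u+c)^{-s} = ∑_{k≥0} (-1)^k C(s+k-1,k) c^k u^{-s-k}`. -/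
noncomputable def shiftC (c : ℂ) (F : PowerSeries ℂ) : PowerSeries ℂ :=
  PowerSeries.mk fun r => ∑ s ∈ Finset.range (r + 1),
    ((-1 : ℂ)) ^ (r - s) * (Nat.choose (r - 1) (r - s) : ℂ) * c ^ (r - s) *
      PowerSeries.coeff s F

/-- The substitution `u ↦ -u` on series in `u⁻¹`. -/
noncomputable def negArg (F : PowerSeries ℂ) : PowerSeries ℂ :=
  PowerSeries.mk fun r => (-1 : ℂ) ^ r * PowerSeries.coeff r F

/-- The series `(1 - u⁻²)⁻¹ = ∑_{r≥0} u^{-2r}`. -/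
noncomputable def geomEven : PowerSeries ℂ :=
  PowerSeries.mk fun r => if Even r then (1 : ℂ) else 0

/-- The defining property of the normalizing series `f`. -/
def isNormSeries (κ : ℂ) (f : PowerSeries ℂ) : Prop :=
  PowerSeries.coeff 0 f = 1 ∧ PowerSeries.coeff 1 f = 0 ∧ f * shiftC κ f = geomEven

/-- The series `f(u/h) = 1 + ∑_{r≥1} f_r h^r u^{-r}` in `ℂ[[u⁻¹]]`. -/
noncomputable def fScaled (h : ℂ) (f : PowerSeries ℂ) : PowerSeries ℂ :=
  PowerSeries.mk fun r => h ^ r * PowerSeries.coeff r f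

/-- The expansion of `h/u` as a series in `u⁻¹`. -/
noncomputable def pSer (h : ℂ) : PowerSeries ℂ :=
  PowerSeries.mk fun r => if r = 1 then h else 0

/-- The expansion of `h/(u - hκ) = ∑_{k≥0} h^{k+1} κ^k u^{-k-1}` as a series in `u⁻¹`. -/
noncomputable def qSer (h κ : ℂ) : PowerSeries ℂ :=
  PowerSeries.mk fun r => if r = 0 then 0 else h ^ r * κ ^ (r - 1)

/-- A complex matrix viewed as a matrix of (constant) power series. -/
noncomputable def toPS {ι : Type*} (M : Matrix ι ι ℂ) : Matrix ι ι (PowerSeries ℂ) :=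
  M.map (PowerSeries.C)

/-- The normalized R-matrix `R̄(u) = f(u/h) R(u)` with `R(u) = 1 - hP/u + hQ/(u-hκ)`,
as a matrix over `ℂ[[u⁻¹]]`. -/
noncomputable def RbarMat (N : ℕ) (ε : Fin N → ℂ) (κ h : ℂ) (f : PowerSeries ℂ) :
    Matrix (Fin N × Fin N) (Fin N × Fin N) (PowerSeries ℂ) :=
  fScaled h f • ((1 : Matrix (Fin N × Fin N) (Fin N × Fin N) (PowerSeries ℂ))
    - pSer h • toPS (Pm N) + qSer h κ • toPS (Qm N ε))

/-- `u ↦ -u` applied entrywise. -/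
noncomputable def negMat {ι : Type*} (M : Matrix ι ι (PowerSeries ℂ)) :
    Matrix ι ι (PowerSeries ℂ) := M.map negArg

/-- `u ↦ u + c` applied entrywise. -/
noncomputable def shiftMat {ι : Type*} (c : ℂ) (M : Matrix ι ι (PowerSeries ℂ)) :
    Matrix ι ι (PowerSeries ℂ) := M.map (shiftC c)

/-- The partial form-transpose applied to the first tensor factor. -/
noncomputable def ptrans1PS (N : ℕ) (ε : Fin N → ℂ)
    (A : Matrix (Fin N × Fin N) (Fin N × Fin N) (PowerSeries ℂ)) :
    Matrix (Fin N × Fin N) (Fin N × Fin N) (PowerSeries ℂ) :=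
  Matrix.of fun p q => PowerSeries.C (ε p.1 * ε q.1) * A (q.1.rev, p.2) (p.1.rev, q.2)

lemma Pm_apply (N : ℕ) (a b c d : Fin N) :
    Pm N (a,b) (c,d) = if a = d ∧ b = c then 1 else 0 := by
  simp [Pm, Matrix.sum_apply, Matrix.single, Matrix.kroneckerMap_apply, ite_and,
    Finset.sum_ite_eq, eq_comm]

lemma Qm_apply (N : ℕ) (ε : Fin N → ℂ) (a b c d : Fin N) :
    Qm N ε (a,b) (c,d) = if b = a.rev ∧ d = c.rev then ε a * ε c else 0 := by
  have h1 : ∀ x : Fin N, (b = x.rev) = (x = b.rev) := by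
    intro x; exact propext ⟨fun h => by subst h; simp, fun h => by subst h; simp⟩
  have h2 : ∀ x : Fin N, (d = x.rev) = (x = d.rev) := by
    intro x; exact propext ⟨fun h => by subst h; simp, fun h => by subst h; simp⟩
  simp only [Qm, Matrix.sum_apply, Matrix.smul_apply, Matrix.kroneckerMap_apply,
    Matrix.single, Matrix.of_apply, h1, h2, ite_and, smul_eq_mul]
  simp [Finset.sum_ite_eq, eq_comm, ite_and]
  aesop

section matid
variable {N : ℕ} {ε : Fin N → ℂ} {θ : ℂ}

lemma Pm_mul_Pm : Pm N * Pm N = 1 := by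
  ext ⟨a,b⟩ ⟨e,g⟩
  simp only [Matrix.mul_apply, Fintype.sum_prod_type, Pm_apply, Matrix.one_apply, ite_and]
  simp [Finset.sum_ite_eq, Finset.sum_ite_eq', eq_comm, Prod.ext_iff, ite_and]

lemma Qm_mul_Qm (hε : ∀ i, ε i * ε i = 1) : Qm N ε * Qm N ε = (N : ℂ) • Qm N ε := by
  ext ⟨a,b⟩ ⟨e,g⟩
  rw [Matrix.mul_apply, Fintype.sum_prod_type]
  simp only [Qm_apply, Matrix.smul_apply, smul_eq_mul, ite_and, mul_ite, ite_mul, zero_mul,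
    mul_zero]
  by_cases h1 : b = a.rev <;> by_cases h2 : g = e.rev <;> simp [h1, h2]
  have hx : ∀ x : Fin N, ε a * ε x * (ε x * ε e) = ε a * ε e := by
    intro x
    rw [show ε a * ε x * (ε x * ε e) = (ε x * ε x) * (ε a * ε e) by ring, hε, one_mul]
  simp [Finset.sum_ite_eq', hx, Finset.card_univ]

lemma Pm_mul_Qm (hrev : ∀ i, ε (Fin.rev i) = θ * ε i) : Pm N * Qm N ε = θ • Qm N ε := by
  ext ⟨a,b⟩ ⟨e,g⟩
  have hc : ∀ x : Fin N, (a = Fin.rev x) = (x = Fin.rev a) := by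
    intro x; exact propext ⟨fun h => by subst h; simp, fun h => by subst h; simp⟩
  rw [Matrix.mul_apply, Fintype.sum_prod_type]
  simp only [Pm_apply, Qm_apply, Matrix.smul_apply, smul_eq_mul, ite_and, mul_ite, ite_mul,
    zero_mul, mul_zero, one_mul]
  by_cases h1 : b = a.rev <;> by_cases h2 : g = e.rev <;> simp [h1, h2]
  · simp only [hc]
    simp [Finset.sum_ite_eq', hrev a]
    ring
  · simp only [hc]
    simp [Finset.sum_ite_eq', h1]

lemma Qm_mul_Pm (hrev : ∀ i, ε (Fin.rev i) = θ * ε i) : Qm N ε * Pm N = θ • Qm N ε := by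
  ext ⟨a,b⟩ ⟨e,g⟩
  rw [Matrix.mul_apply, Fintype.sum_prod_type]
  simp only [Pm_apply, Qm_apply, Matrix.smul_apply, smul_eq_mul, ite_and, mul_ite, ite_mul,
    zero_mul, mul_zero, mul_one]
  by_cases h1 : b = a.rev <;> by_cases h2 : g = e.rev <;> simp [h1, h2]
  · rw [hrev e]; ring
  · intro hg
    exact absurd (by rw [hg, Fin.rev_rev]) h2

end matid

namespace Aux


lemma coeff_shiftC (c : ℂ) (F : PowerSeries ℂ) (r : ℕ) :
    PowerSeries.coeff r (shiftC c F) = ∑ s ∈ Finset.range (r + 1),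
      (-1 : ℂ) ^ (r - s) * (Nat.choose (r - 1) (r - s) : ℂ) * c ^ (r - s) *
        PowerSeries.coeff s F := by
  simp [shiftC]

lemma shiftC_add (c : ℂ) (F G : PowerSeries ℂ) :
    shiftC c (F + G) = shiftC c F + shiftC c G := by
  ext r
  simp [coeff_shiftC, Finset.sum_add_distrib, mul_add]

lemma shiftC_zero (c : ℂ) : shiftC c 0 = 0 := by
  ext r; simp [coeff_shiftC]

lemma shiftC_C (c a : ℂ) : shiftC c (PowerSeries.C a) = PowerSeries.C a := by
  ext r
  rcases r with _ | n
  · simp [coeff_shiftC]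
  · rw [coeff_shiftC]
    rw [Finset.sum_eq_zero, PowerSeries.coeff_C, if_neg (Nat.succ_ne_zero n)]
    intro s hs
    rcases s with _ | t
    · simp [Nat.choose_eq_zero_of_lt (by omega : n + 1 - 1 < n + 1 - 0)]
    · simp [PowerSeries.coeff_C]

lemma shiftC_one (c : ℂ) : shiftC c 1 = 1 := by
  simpa using shiftC_C c 1

lemma shiftC_C_mul (c a : ℂ) (F : PowerSeries ℂ) :
    shiftC c (PowerSeries.C a * F) = PowerSeries.C a * shiftC c F := by
  ext r
  simp only [coeff_shiftC, PowerSeries.coeff_C_mul, Finset.mul_sum]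
  exact Finset.sum_congr rfl fun s _ => by ring

/-- The series of `(u+c)⁻¹` in `X = u⁻¹`. -/
noncomputable def Dser (c : ℂ) : PowerSeries ℂ :=
  PowerSeries.mk fun r => if r = 0 then 0 else (-1 : ℂ) ^ (r - 1) * c ^ (r - 1)

lemma tri_swap (r : ℕ) (g : ℕ → ℕ → ℂ) :
    ∑ m ∈ Finset.range r, ∑ t ∈ Finset.range (r - m), g m t
      = ∑ t ∈ Finset.range r, ∑ m ∈ Finset.range (r - t), g m t := by
  simp_rw [Finset.sum_sigma']
  refine Finset.sum_nbij' (fun p => ⟨p.2, p.1⟩) (fun p => ⟨p.2, p.1⟩) ?_ ?_ ?_ ?_ ?_ <;>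
    simp <;> omega

lemma hockey (r t : ℕ) (ht : t < r) :
    ∑ m ∈ Finset.range (r - t), Nat.choose (r - m - 1 - 1) (r - m - 1 - t)
      = Nat.choose (r - 1) (r - 1 - t) := by
  rw [← Finset.sum_range_reflect]
  have hre : ∀ m ∈ Finset.range (r - t),
      Nat.choose (r - (r - t - 1 - m) - 1 - 1) (r - (r - t - 1 - m) - 1 - t)
        = Nat.choose (t + m - 1) m := by
    intro m hm
    simp only [Finset.mem_range] at hm
    congr 1 <;> omega
  rw [Finset.sum_congr rfl hre]
  rcases t with _ | t'
  · rw [Finset.sum_eq_single 0]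
    · simp
    · intro m _ hm
      exact Nat.choose_eq_zero_of_lt (by omega)
    · intro habs
      exact absurd (Finset.mem_range.2 (by omega)) habs
  · have hsy : ∀ m ∈ Finset.range (r - (t' + 1)),
        Nat.choose (t' + 1 + m - 1) m = Nat.choose (t' + m) t' := by
      intro m _
      have h1 : t' + 1 + m - 1 = t' + m := by omega
      rw [h1, ← Nat.choose_symm (by omega : t' ≤ t' + m)]
      congr 1
      omega
    rw [Finset.sum_congr rfl hsy]
    have h2 : ∑ m ∈ Finset.range (r - (t' + 1)), Nat.choose (t' + m) t'
        = ∑ i ∈ Finset.Ico t' (r - 1), Nat.choose i t' := by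
      rw [Finset.sum_Ico_eq_sum_range]
      apply Finset.sum_congr (by congr 1; omega)
      intro m _
      rw [add_comm t' m]
    rw [h2, show Finset.Ico t' (r - 1) = Finset.Icc t' (r - 2) by
        rw [← Finset.Ico_add_one_right_eq_Icc]; congr 1; omega]
    rw [Nat.sum_Icc_choose, show r - 2 + 1 = r - 1 by omega]
    exact (Nat.choose_symm (by omega : t' + 1 ≤ r - 1)).symm

lemma shiftC_X_mul (c : ℂ) (F : PowerSeries ℂ) :
    shiftC c (X * F) = Dser c * shiftC c F := by
  ext r
  have h0 : (PowerSeries.coeff 0) (X * F) = 0 := by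
    simp [PowerSeries.coeff_zero_eq_constantCoeff]
  have hL : PowerSeries.coeff r (shiftC c (X * F))
      = ∑ t ∈ Finset.range r, (-1 : ℂ) ^ (r - (t + 1))
          * (Nat.choose (r - 1) (r - (t + 1)) : ℂ) * c ^ (r - (t + 1))
          * PowerSeries.coeff t F := by
    rw [coeff_shiftC, Finset.sum_range_succ']
    simp only [PowerSeries.coeff_succ_X_mul, h0, mul_zero, add_zero]
  have hD0 : PowerSeries.coeff 0 (Dser c) = 0 := by simp [Dser]
  have hR : PowerSeries.coeff r (Dser c * shiftC c F)
      = ∑ m ∈ Finset.range r, (-1 : ℂ) ^ m * c ^ m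
          * PowerSeries.coeff (r - (m + 1)) (shiftC c F) := by
    rw [PowerSeries.coeff_mul, Finset.Nat.sum_antidiagonal_eq_sum_range_succ_mk,
      Finset.sum_range_succ']
    rw [hD0, zero_mul, add_zero]
    apply Finset.sum_congr rfl
    intro m _
    simp [Dser, Nat.add_sub_cancel]
  rw [hL, hR]
  have hexp : ∀ m ∈ Finset.range r,
      (-1 : ℂ) ^ m * c ^ m * PowerSeries.coeff (r - (m + 1)) (shiftC c F)
        = ∑ t ∈ Finset.range (r - m), (-1 : ℂ) ^ m * c ^ m *
            ((-1 : ℂ) ^ (r - m - 1 - t) * (Nat.choose (r - m - 1 - 1) (r - m - 1 - t) : ℂ)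
              * c ^ (r - m - 1 - t) * PowerSeries.coeff t F) := by
    intro m hm
    simp only [Finset.mem_range] at hm
    rw [coeff_shiftC, Finset.mul_sum, show r - (m + 1) + 1 = r - m by omega]
    apply Finset.sum_congr rfl
    intro t _
    rw [show r - (m + 1) = r - m - 1 by omega]
  rw [Finset.sum_congr rfl hexp, tri_swap]
  apply Finset.sum_congr rfl
  intro t ht
  simp only [Finset.mem_range] at ht
  have hterm : ∀ m ∈ Finset.range (r - t),
      (-1 : ℂ) ^ m * c ^ m *
          ((-1 : ℂ) ^ (r - m - 1 - t) * (Nat.choose (r - m - 1 - 1) (r - m - 1 - t) : ℂ)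
            * c ^ (r - m - 1 - t) * PowerSeries.coeff t F)
        = ((-1 : ℂ) ^ (r - (t + 1)) * c ^ (r - (t + 1)) * PowerSeries.coeff t F)
            * (Nat.choose (r - m - 1 - 1) (r - m - 1 - t) : ℂ) := by
    intro m hm
    simp only [Finset.mem_range] at hm
    have e1 : (-1 : ℂ) ^ m * (-1 : ℂ) ^ (r - m - 1 - t) = (-1 : ℂ) ^ (r - (t + 1)) := by
      rw [← pow_add]; congr 1; omega
    have e2 : (c : ℂ) ^ m * c ^ (r - m - 1 - t) = c ^ (r - (t + 1)) := by
      rw [← pow_add]; congr 1; omega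
    calc (-1 : ℂ) ^ m * c ^ m *
          ((-1 : ℂ) ^ (r - m - 1 - t) * (Nat.choose (r - m - 1 - 1) (r - m - 1 - t) : ℂ)
            * c ^ (r - m - 1 - t) * PowerSeries.coeff t F)
        = ((-1 : ℂ) ^ m * (-1 : ℂ) ^ (r - m - 1 - t)) * (c ^ m * c ^ (r - m - 1 - t))
            * PowerSeries.coeff t F * (Nat.choose (r - m - 1 - 1) (r - m - 1 - t) : ℂ) := by
          ring
      _ = _ := by rw [e1, e2]
  rw [Finset.sum_congr rfl hterm, ← Finset.mul_sum]
  rw [← Nat.cast_sum, hockey r t ht]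
  rw [show r - 1 - t = r - (t + 1) by omega]
  ring

lemma shiftC_Xpow_mul (c : ℂ) (n : ℕ) (F : PowerSeries ℂ) :
    shiftC c (X ^ n * F) = Dser c ^ n * shiftC c F := by
  induction n generalizing F with
  | zero => simp
  | succ k ih =>
    have h1 : (X : PowerSeries ℂ) ^ (k + 1) * F = X ^ k * (X * F) := by ring
    rw [h1, ih, shiftC_X_mul, pow_succ]
    ring

lemma coeff_shiftC_congr {c : ℂ} {F G : PowerSeries ℂ} {r : ℕ}
    (h : ∀ s ≤ r, PowerSeries.coeff s F = PowerSeries.coeff s G) :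
    PowerSeries.coeff r (shiftC c F) = PowerSeries.coeff r (shiftC c G) := by
  rw [coeff_shiftC, coeff_shiftC]
  apply Finset.sum_congr rfl
  intro s hs
  rw [h s (by simpa [Nat.lt_succ_iff] using hs)]

lemma shiftC_poly_mul (c : ℂ) (P : Polynomial ℂ) (G : PowerSeries ℂ) :
    shiftC c ((P : PowerSeries ℂ) * G) = shiftC c (P : PowerSeries ℂ) * shiftC c G := by
  induction P using Polynomial.induction_on' with
  | add p q hp hq =>
    rw [Polynomial.coe_add, add_mul, shiftC_add, hp, hq, shiftC_add, add_mul]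
  | monomial n a =>
    have hm : ((Polynomial.monomial n a : Polynomial ℂ) : PowerSeries ℂ)
        = PowerSeries.C a * X ^ n := by
      rw [Polynomial.coe_monomial]
      ext k
      simp [PowerSeries.coeff_monomial, PowerSeries.coeff_C_mul, PowerSeries.coeff_X_pow]
    rw [hm, mul_assoc, shiftC_C_mul, shiftC_Xpow_mul, shiftC_C_mul]
    have h2 : shiftC c ((X : PowerSeries ℂ) ^ n) = Dser c ^ n := by
      have := shiftC_Xpow_mul c n (1 : PowerSeries ℂ)
      rw [mul_one, shiftC_one, mul_one] at this
      exact this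
    rw [h2]
    ring

lemma shiftC_mul (c : ℂ) (F G : PowerSeries ℂ) :
    shiftC c (F * G) = shiftC c F * shiftC c G := by
  ext r
  set P : Polynomial ℂ := PowerSeries.trunc (r + 1) F with hP
  have hcoeff : ∀ s ≤ r, PowerSeries.coeff s (P : PowerSeries ℂ) = PowerSeries.coeff s F := by
    intro s hs
    rw [Polynomial.coeff_coe, hP, PowerSeries.coeff_trunc, if_pos (by omega)]
  have h1 : ∀ s ≤ r, PowerSeries.coeff s (F * G)
      = PowerSeries.coeff s ((P : PowerSeries ℂ) * G) := by
    intro s hs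
    rw [PowerSeries.coeff_mul, PowerSeries.coeff_mul]
    apply Finset.sum_congr rfl
    intro x hx
    have hx' := Finset.HasAntidiagonal.mem_antidiagonal.1 hx
    rw [hcoeff x.1 (by omega)]
  calc PowerSeries.coeff r (shiftC c (F * G))
      = PowerSeries.coeff r (shiftC c ((P : PowerSeries ℂ) * G)) :=
        coeff_shiftC_congr (fun s hs => h1 s hs)
    _ = PowerSeries.coeff r (shiftC c (P : PowerSeries ℂ) * shiftC c G) := by
        rw [shiftC_poly_mul]
    _ = PowerSeries.coeff r (shiftC c F * shiftC c G) := by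
        rw [PowerSeries.coeff_mul, PowerSeries.coeff_mul]
        apply Finset.sum_congr rfl
        intro x hx
        have hx' := Finset.HasAntidiagonal.mem_antidiagonal.1 hx
        rw [coeff_shiftC_congr (fun s hs => hcoeff s (by omega))]

/-- `shiftC c` as a ring homomorphism. -/
noncomputable def shiftHom (c : ℂ) : PowerSeries ℂ →+* PowerSeries ℂ where
  toFun := shiftC c
  map_one' := shiftC_one c
  map_mul' := shiftC_mul c
  map_zero' := shiftC_zero c
  map_add' := shiftC_add c

lemma pSer_eq (h : ℂ) : pSer h = PowerSeries.C h * X := by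
  ext r
  simp [pSer, PowerSeries.coeff_C_mul, PowerSeries.coeff_X]

lemma fScaled_eq_rescale (h : ℂ) (f : PowerSeries ℂ) : fScaled h f = rescale h f := by
  ext r
  simp [fScaled, PowerSeries.coeff_rescale]

lemma shiftC_fScaled (h κ : ℂ) (f : PowerSeries ℂ) :
    shiftC (h * κ) (fScaled h f) = fScaled h (shiftC κ f) := by
  ext r
  rw [coeff_shiftC]
  simp only [fScaled, PowerSeries.coeff_mk]
  rw [coeff_shiftC, Finset.mul_sum]
  apply Finset.sum_congr rfl
  intro s hs
  simp only [Finset.mem_range, Nat.lt_succ_iff] at hs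
  have e : h ^ (r - s) * h ^ s = h ^ r := by rw [← pow_add]; congr 1; omega
  calc (-1:ℂ) ^ (r - s) * ((r-1).choose (r-s) : ℂ) * (h * κ) ^ (r - s) * (h ^ s * PowerSeries.coeff s f)
      = (h ^ (r-s) * h ^ s) * ((-1:ℂ) ^ (r - s) * ((r-1).choose (r-s) : ℂ) * κ ^ (r-s) * PowerSeries.coeff s f) := by
        rw [mul_pow]; try ring
    _ = _ := by rw [e]; try ring

lemma shiftC_pSer (h κ : ℂ) : shiftC (h * κ) (pSer h) = qSer h (-κ) := by
  ext r
  rw [coeff_shiftC]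
  simp only [pSer, PowerSeries.coeff_mk, mul_ite, mul_zero, qSer]
  rcases r with _ | n
  · simp
  · rw [Finset.sum_ite_eq' (Finset.range (n + 2)) 1
      (fun s => (-1:ℂ) ^ (n + 1 - s) * ((n + 1 - 1).choose (n + 1 - s) : ℂ) * (h*κ) ^ (n + 1 - s) * h)]
    simp only [Finset.mem_range, if_pos (by omega : 1 < n + 2), if_neg (Nat.succ_ne_zero n)]
    have e1 : n + 1 - 1 = n := rfl
    rw [e1, Nat.choose_self, Nat.cast_one, mul_one, mul_pow, neg_pow κ]
    ring

lemma shiftC_qSer (h κ : ℂ) : shiftC (h * κ) (qSer h κ) = pSer h := by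
  ext r
  rw [coeff_shiftC]
  simp only [qSer, PowerSeries.coeff_mk]
  rcases r with _ | n
  · simp [pSer]
  · rw [Finset.sum_range_succ', if_pos rfl, mul_zero, add_zero]
    have hterm : ∀ t ∈ Finset.range (n + 1),
        (-1:ℂ) ^ (n + 1 - (t+1)) * ((n + 1 - 1).choose (n + 1 - (t+1)) : ℂ) * (h*κ) ^ (n + 1 - (t+1))
          * (if t + 1 = 0 then 0 else h ^ (t+1) * κ ^ (t + 1 - 1))
        = (h ^ (n+1) * κ ^ n) * ((-1:ℂ) ^ (n - t) * ((n).choose (n - t) : ℂ)) := by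
      intro t htr
      simp only [Finset.mem_range] at htr
      rw [if_neg (Nat.succ_ne_zero t)]
      have e1 : n + 1 - (t + 1) = n - t := by omega
      have e2 : t + 1 - 1 = t := rfl
      have e3 : n + 1 - 1 = n := rfl
      rw [e1, e2, e3, mul_pow]
      have e4 : h ^ (n - t) * h ^ (t + 1) = h ^ (n + 1) := by rw [← pow_add]; congr 1; omega
      have e5 : κ ^ (n - t) * κ ^ t = κ ^ n := by rw [← pow_add]; congr 1; omega
      calc (-1:ℂ) ^ (n - t) * ((n).choose (n - t) : ℂ) * (h ^ (n-t) * κ ^ (n-t)) * (h ^ (t+1) * κ ^ t)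
          = (h ^ (n - t) * h ^ (t+1)) * (κ ^ (n-t) * κ ^ t) * ((-1:ℂ) ^ (n - t) * ((n).choose (n - t) : ℂ)) := by ring
        _ = _ := by rw [e4, e5]
    rw [Finset.sum_congr rfl hterm, ← Finset.mul_sum]
    have hrefl : ∑ t ∈ Finset.range (n + 1), ((-1:ℂ) ^ (n - t) * ((n).choose (n - t) : ℂ))
        = ∑ t ∈ Finset.range (n + 1), ((-1:ℂ) ^ t * ((n).choose t : ℂ)) := by
      rw [← Finset.sum_range_reflect]
      apply Finset.sum_congr rfl
      intro t htr
      simp only [Finset.mem_range] at htr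
      congr 2 <;> [skip; congr 1] <;> omega
    rw [hrefl]
    have halt : ∑ t ∈ Finset.range (n + 1), ((-1:ℂ) ^ t * ((n).choose t : ℂ))
        = if n = 0 then 1 else 0 := by
      have := Int.alternating_sum_range_choose (n := n)
      have h2 := congrArg (fun z : ℤ => (z : ℂ)) this
      push_cast at h2
      rw [h2]
    rw [halt]
    rcases n with _ | m
    · simp [pSer]
    · simp [pSer]

lemma geomEven_mul : (1 - X ^ 2 : PowerSeries ℂ) * geomEven = 1 := by
  have hre : (1 - X ^ 2 : PowerSeries ℂ) * geomEven = geomEven - geomEven * X ^ 2 := by ring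
  rw [hre]
  ext r
  rw [map_sub, PowerSeries.coeff_mul_X_pow']
  rcases r with _ | n
  · simp [geomEven]
  · rcases n with _ | m
    · simp [geomEven]
    · have h2 : 2 ≤ m + 1 + 1 := by omega
      rw [if_pos h2]
      have e1 : m + 1 + 1 - 2 = m := by omega
      rw [e1]
      simp [geomEven, PowerSeries.coeff_one, Nat.even_add_one, Nat.succ_ne_zero]

lemma norm_prod_one (h κ : ℂ) (f : PowerSeries ℂ) (hgeom : f * shiftC κ f = geomEven) :
    (1 - pSer h * pSer h) * (fScaled h f * fScaled h (shiftC κ f)) = 1 := by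
  have h2 : fScaled h f * fScaled h (shiftC κ f) = rescale h geomEven := by
    rw [fScaled_eq_rescale, fScaled_eq_rescale, ← _root_.map_mul, hgeom]
  have h3 : (1 : PowerSeries ℂ) - pSer h * pSer h = rescale h (1 - X ^ 2) := by
    rw [_root_.map_sub, _root_.map_one, _root_.map_pow, rescale_X, pSer_eq]
    ring
  rw [h2, h3, ← _root_.map_mul, geomEven_mul, _root_.map_one]

lemma qSer_mul (h κ : ℂ) : qSer h κ * (1 - PowerSeries.C (h * κ) * X) = PowerSeries.C h * X := by
  have hre : qSer h κ * (1 - PowerSeries.C (h * κ) * X)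
      = qSer h κ - PowerSeries.C (h * κ) * (qSer h κ * X) := by ring
  rw [hre]
  ext r
  rw [map_sub, PowerSeries.coeff_C_mul, ← pow_one (X : PowerSeries ℂ),
    PowerSeries.coeff_mul_X_pow', PowerSeries.coeff_C_mul]
  rcases r with _ | n
  · simp [qSer, PowerSeries.coeff_X]
  · rcases n with _ | m
    · simp [qSer, PowerSeries.coeff_X]
    · rw [if_pos (by omega : 1 ≤ m + 1 + 1)]
      simp [qSer, pow_one, PowerSeries.coeff_X]
      try ring

lemma keyScalar (h κ θ Nc : ℂ) (hκrel : 2 * κ = Nc - 2 * θ) :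
    qSer h κ - qSer h (-κ) + PowerSeries.C θ * (pSer h * qSer h (-κ))
      + PowerSeries.C θ * (pSer h * qSer h κ)
      - PowerSeries.C Nc * (qSer h κ * qSer h (-κ)) = 0 := by
  have hA : qSer h κ * (1 - PowerSeries.C h * PowerSeries.C κ * X)
      = PowerSeries.C h * X := by
    have := qSer_mul h κ
    rwa [_root_.map_mul] at this
  have hB : qSer h (-κ) * (1 + PowerSeries.C h * PowerSeries.C κ * X)
      = PowerSeries.C h * X := by
    have := qSer_mul h (-κ)
    rw [_root_.map_mul, _root_.map_neg] at this
    rw [← this]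
    ring
  have hC : (PowerSeries.C Nc : PowerSeries ℂ)
      = 2 * PowerSeries.C κ + 2 * PowerSeries.C θ := by
    rw [show Nc = 2 * κ + 2 * θ by linear_combination -hκrel, _root_.map_add, _root_.map_mul,
      _root_.map_mul, map_ofNat]
  have hu1 : IsUnit (1 - PowerSeries.C h * PowerSeries.C κ * X) := by
    rw [PowerSeries.isUnit_iff_constantCoeff]
    simp
  have hu2 : IsUnit (1 + PowerSeries.C h * PowerSeries.C κ * X) := by
    rw [PowerSeries.isUnit_iff_constantCoeff]
    simp
  obtain ⟨u, hu⟩ := hu1.mul hu2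
  rw [← Units.mul_left_eq_zero (u := u)]
  rw [hu]
  rw [pSer_eq]
  linear_combination
    ((1 + PowerSeries.C h * PowerSeries.C κ * X)
      + PowerSeries.C θ * (PowerSeries.C h * X) * (1 + PowerSeries.C h * PowerSeries.C κ * X)
      - PowerSeries.C Nc * qSer h (-κ) * (1 + PowerSeries.C h * PowerSeries.C κ * X)) * hA
    + (-(1 - PowerSeries.C h * PowerSeries.C κ * X)
      + PowerSeries.C θ * (PowerSeries.C h * X) * (1 - PowerSeries.C h * PowerSeries.C κ * X)
      - PowerSeries.C Nc * (PowerSeries.C h * X)) * hB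
    + (-(PowerSeries.C h * X) ^ 2) * hC


section MatPS
variable {ι : Type*} [Fintype ι] [DecidableEq ι]

lemma toPS_mul (M K : Matrix ι ι ℂ) : toPS (M * K) = toPS M * toPS K :=
  Matrix.map_mul

lemma toPS_one : toPS (1 : Matrix ι ι ℂ) = 1 :=
  Matrix.map_one _ (map_zero _) (map_one _)

lemma toPS_smul (a : ℂ) (M : Matrix ι ι ℂ) : toPS (a • M) = PowerSeries.C a • toPS M := by
  ext i j
  simp [toPS, _root_.map_mul]

end MatPS

section Ptrans
variable {N : ℕ} {ε : Fin N → ℂ} {θ : ℂ}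

lemma ptrans1PS_smul (x : PowerSeries ℂ) (A : Matrix (Fin N × Fin N) (Fin N × Fin N) (PowerSeries ℂ)) :
    ptrans1PS N ε (x • A) = x • ptrans1PS N ε A := by
  ext ⟨p1, p2⟩ ⟨q1, q2⟩
  simp only [ptrans1PS, Matrix.of_apply, Matrix.smul_apply, smul_eq_mul]
  ring

lemma ptrans1PS_add (A B : Matrix (Fin N × Fin N) (Fin N × Fin N) (PowerSeries ℂ)) :
    ptrans1PS N ε (A + B) = ptrans1PS N ε A + ptrans1PS N ε B := by
  ext ⟨p1, p2⟩ ⟨q1, q2⟩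
  simp only [ptrans1PS, Matrix.of_apply, Matrix.add_apply]
  ring

lemma ptrans1PS_sub (A B : Matrix (Fin N × Fin N) (Fin N × Fin N) (PowerSeries ℂ)) :
    ptrans1PS N ε (A - B) = ptrans1PS N ε A - ptrans1PS N ε B := by
  ext ⟨p1, p2⟩ ⟨q1, q2⟩
  simp only [ptrans1PS, Matrix.of_apply, Matrix.sub_apply]
  ring

lemma ptrans1PS_one (hε : ∀ i, ε i * ε i = 1) :
    ptrans1PS N ε (1 : Matrix (Fin N × Fin N) (Fin N × Fin N) (PowerSeries ℂ)) = 1 := by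
  ext ⟨p1, p2⟩ ⟨q1, q2⟩
  simp only [ptrans1PS, Matrix.of_apply, Matrix.one_apply, Prod.mk.injEq, ite_and, Prod.ext_iff]
  by_cases h1 : p1 = q1
  · subst h1
    by_cases h2 : p2 = q2
    · subst h2
      simp [← _root_.map_mul, hε p1]
    · simp [h2]
  · have hne : ¬ q1.rev = p1.rev := fun hc => h1 (Fin.rev_injective hc).symm
    simp [hne, h1]

lemma ptrans1PS_P (hε : ∀ i, ε i * ε i = 1) :
    ptrans1PS N ε (toPS (Pm N)) = toPS (Qm N ε) := by
  ext ⟨p1, p2⟩ ⟨q1, q2⟩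
  simp only [ptrans1PS, Matrix.of_apply, toPS, Matrix.map_apply, Pm_apply, Qm_apply,
    ← _root_.map_mul]
  congr 1
  by_cases h1 : p2 = p1.rev <;> by_cases h2 : q2 = q1.rev
  · rw [if_pos ⟨h2.symm, h1⟩, if_pos ⟨h1, h2⟩]
    ring
  · rw [if_neg fun hc => h2 hc.1.symm, if_neg fun hc => h2 hc.2]
    simp
  · rw [if_neg fun hc => h1 hc.2, if_neg fun hc => h1 hc.1]
    simp
  · rw [if_neg fun hc => h1 hc.2, if_neg fun hc => h1 hc.1]
    simp

lemma ptrans1PS_Q (hε : ∀ i, ε i * ε i = 1) (hrev : ∀ i, ε (Fin.rev i) = θ * ε i)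
    (hθ : θ * θ = 1) :
    ptrans1PS N ε (toPS (Qm N ε)) = toPS (Pm N) := by
  ext ⟨p1, p2⟩ ⟨q1, q2⟩
  simp only [ptrans1PS, Matrix.of_apply, toPS, Matrix.map_apply, Pm_apply, Qm_apply,
    Fin.rev_rev, ← _root_.map_mul]
  congr 1
  by_cases h1 : p2 = q1 <;> by_cases h2 : q2 = p1
  · rw [if_pos ⟨h1, h2⟩, if_pos ⟨h2.symm, h1⟩]
    rw [hrev q1, hrev p1]
    have hval : ε p1 * ε q1 * (θ * ε q1 * (θ * ε p1)) = 1 := by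
      calc ε p1 * ε q1 * (θ * ε q1 * (θ * ε p1))
          = (θ * θ) * (ε p1 * ε p1) * (ε q1 * ε q1) := by ring
        _ = 1 := by rw [hθ, hε, hε]; ring
    rw [hval]
  · rw [if_neg fun hc => h2 hc.2, if_neg fun hc => h2 hc.1.symm]
    simp
  · rw [if_neg fun hc => h1 hc.1, if_neg fun hc => h1 hc.2]
    simp
  · rw [if_neg fun hc => h1 hc.1, if_neg fun hc => h1 hc.2]
    simp

end Ptrans

section Shift

lemma shiftC_sub (c : ℂ) (F G : PowerSeries ℂ) :
    shiftC c (F - G) = shiftC c F - shiftC c G :=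
  map_sub (shiftHom c) F G

lemma shiftC_ite01 (c : ℂ) (P : Prop) [Decidable P] :
    shiftC c (if P then (1 : PowerSeries ℂ) else 0) = (if P then (1 : PowerSeries ℂ) else 0) := by
  split
  · exact shiftC_one c
  · exact shiftC_zero c

lemma shiftMat_Rbar (N : ℕ) (ε : Fin N → ℂ) (κ h : ℂ) (f : PowerSeries ℂ) :
    shiftMat (h * κ) (RbarMat N ε κ h f)
      = fScaled h (shiftC κ f) •
          ((1 : Matrix (Fin N × Fin N) (Fin N × Fin N) (PowerSeries ℂ))
            - qSer h (-κ) • toPS (Pm N) + pSer h • toPS (Qm N ε)) := by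
  ext i j
  simp only [shiftMat, Matrix.map_apply, RbarMat, Matrix.smul_apply, Matrix.add_apply,
    Matrix.sub_apply, Matrix.one_apply, toPS, smul_eq_mul]
  rw [shiftC_mul, shiftC_add, shiftC_sub, shiftC_mul, shiftC_mul, shiftC_ite01, shiftC_C,
    shiftC_C, shiftC_fScaled, shiftC_pSer, shiftC_qSer]

end Shift

end Aux

/-- Crossing symmetry: `R̄(u) · R̄(u + hκ)' = 1` and `R̄(u + hκ)' · R̄(u) = 1`. -/
theorem statement14 (N : ℕ) (hN : 2 ≤ N) (ε : Fin N → ℂ) (κ : ℂ)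
    (hcase : orthCase N ε κ ∨ spCase N ε κ) (h : ℂ)
    (f : PowerSeries ℂ) (hf : isNormSeries κ f) :
    RbarMat N ε κ h f * ptrans1PS N ε (shiftMat (h * κ) (RbarMat N ε κ h f)) = 1 ∧
    ptrans1PS N ε (shiftMat (h * κ) (RbarMat N ε κ h f)) * RbarMat N ε κ h f = 1 := by
  classical
  obtain ⟨θ, hθ, hε, hrev, hκrel⟩ :
      ∃ θ : ℂ, θ * θ = 1 ∧ (∀ i, ε i * ε i = 1) ∧ (∀ i, ε (Fin.rev i) = θ * ε i) ∧
        2 * κ = (N : ℂ) - 2 * θ := by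
    rcases hcase with ⟨hone, hκ⟩ | ⟨hNe, hsgn, hκ⟩
    · refine ⟨1, by norm_num, fun i => by rw [hone]; norm_num,
        fun i => by rw [hone, hone]; norm_num, ?_⟩
      rw [hκ]; ring
    · refine ⟨-1, by norm_num, fun i => ?_, fun i => ?_, ?_⟩
      · rw [hsgn i]; split <;> norm_num
      · rw [hsgn i, hsgn (Fin.rev i)]
        have hlt : (i : ℕ) < N := i.isLt
        have hv : ((Fin.rev i : Fin N) : ℕ) = N - (i + 1) := rfl
        rw [hv]
        by_cases hi : (i : ℕ) < N / 2
        · rw [if_pos hi, if_neg (by omega)]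
          norm_num
        · rw [if_neg hi, if_pos (by omega)]
          norm_num
      · rw [hκ]; ring
  set P' : Matrix (Fin N × Fin N) (Fin N × Fin N) (PowerSeries ℂ) := toPS (Pm N) with hP'
  set Q' : Matrix (Fin N × Fin N) (Fin N × Fin N) (PowerSeries ℂ) := toPS (Qm N ε) with hQ'
  set p : PowerSeries ℂ := pSer h with hp
  set q : PowerSeries ℂ := qSer h κ with hq
  set q' : PowerSeries ℂ := qSer h (-κ) with hq'2
  set F : PowerSeries ℂ := fScaled h f with hF
  set G : PowerSeries ℂ := fScaled h (shiftC κ f) with hG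
  have hPP : P' * P' = 1 := by rw [hP', ← Aux.toPS_mul, Pm_mul_Pm, Aux.toPS_one]
  have hQQ : Q' * Q' = PowerSeries.C (N : ℂ) • Q' := by
    rw [hQ', ← Aux.toPS_mul, Qm_mul_Qm hε, Aux.toPS_smul]
  have hPQ : P' * Q' = PowerSeries.C θ • Q' := by
    rw [hP', hQ', ← Aux.toPS_mul, Pm_mul_Qm hrev, Aux.toPS_smul]
  have hQP : Q' * P' = PowerSeries.C θ • Q' := by
    rw [hP', hQ', ← Aux.toPS_mul, Qm_mul_Pm hrev, Aux.toPS_smul]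
  have hAeq : RbarMat N ε κ h f = F • ((1 : Matrix (Fin N × Fin N) (Fin N × Fin N)
      (PowerSeries ℂ)) - p • P' + q • Q') := rfl
  have hBeq : ptrans1PS N ε (shiftMat (h * κ) (RbarMat N ε κ h f))
      = G • ((1 : Matrix (Fin N × Fin N) (Fin N × Fin N) (PowerSeries ℂ))
          - q' • Q' + p • P') := by
    rw [Aux.shiftMat_Rbar, Aux.ptrans1PS_smul, Aux.ptrans1PS_add, Aux.ptrans1PS_sub,
      Aux.ptrans1PS_smul, Aux.ptrans1PS_smul, Aux.ptrans1PS_one hε, Aux.ptrans1PS_P hε,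
      Aux.ptrans1PS_Q hε hrev hθ]
  have hE : q - q' + PowerSeries.C θ * (p * q') + PowerSeries.C θ * (p * q)
      - PowerSeries.C (N : ℂ) * (q * q') = 0 := Aux.keyScalar h κ θ (N : ℂ) hκrel
  have hFG : (1 - p * p) * (F * G) = 1 := Aux.norm_prod_one h κ f hf.2.2
  set M1 : Matrix (Fin N × Fin N) (Fin N × Fin N) (PowerSeries ℂ) :=
    (1 : Matrix (Fin N × Fin N) (Fin N × Fin N) (PowerSeries ℂ)) - p • P' + q • Q' with hM1
  set M2 : Matrix (Fin N × Fin N) (Fin N × Fin N) (PowerSeries ℂ) :=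
    (1 : Matrix (Fin N × Fin N) (Fin N × Fin N) (PowerSeries ℂ)) - q' • Q' + p • P' with hM2
  have hM12 : M1 * M2 = (1 - p * p) • (1 : Matrix (Fin N × Fin N) (Fin N × Fin N) (PowerSeries ℂ)) := by
    have expand : M1 * M2 = (1 - p * p) • (1 : Matrix (Fin N × Fin N) (Fin N × Fin N) (PowerSeries ℂ))
        + (q - q' + PowerSeries.C θ * (p * q') + PowerSeries.C θ * (p * q)
          - PowerSeries.C (N : ℂ) * (q * q')) • Q' := by
      rw [hM1, hM2]
      simp only [Matrix.mul_add, Matrix.add_mul, Matrix.mul_sub, Matrix.sub_mul,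
        Matrix.smul_mul, Matrix.mul_smul, Matrix.mul_one, Matrix.one_mul,
        hPP, hPQ, hQP, hQQ, smul_smul]
      ext i j
      simp only [Matrix.add_apply, Matrix.sub_apply, Matrix.smul_apply, smul_eq_mul]
      ring
    rw [expand, hE, zero_smul, add_zero]
  have hM21 : M2 * M1 = (1 - p * p) • (1 : Matrix (Fin N × Fin N) (Fin N × Fin N) (PowerSeries ℂ)) := by
    have expand : M2 * M1 = (1 - p * p) • (1 : Matrix (Fin N × Fin N) (Fin N × Fin N) (PowerSeries ℂ))
        + (q - q' + PowerSeries.C θ * (p * q') + PowerSeries.C θ * (p * q)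
          - PowerSeries.C (N : ℂ) * (q * q')) • Q' := by
      rw [hM1, hM2]
      simp only [Matrix.mul_add, Matrix.add_mul, Matrix.mul_sub, Matrix.sub_mul,
        Matrix.smul_mul, Matrix.mul_smul, Matrix.mul_one, Matrix.one_mul,
        hPP, hPQ, hQP, hQQ, smul_smul]
      ext i j
      simp only [Matrix.add_apply, Matrix.sub_apply, Matrix.smul_apply, smul_eq_mul]
      ring
    rw [expand, hE, zero_smul, add_zero]
  constructor
  · rw [hBeq, hAeq, Matrix.smul_mul, Matrix.mul_smul, smul_smul, hM12,
      smul_smul, mul_comm (F * G) (1 - p * p), hFG, one_smul]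
  · rw [hBeq, hAeq, Matrix.smul_mul, Matrix.mul_smul, smul_smul, hM21,
      smul_smul, mul_comm G F, mul_comm (F * G) (1 - p * p), hFG, one_smul]
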